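/- Let p, l be primes with p ∣ (l−1), and α ∈ ℤ with α mod l not a p-th power in F_l. Then any solution (x_0, ..., x_p) in Z_l of x_1^p + l·x_2^p + ... + l^{p−1}·x_p^p = α·x_0^p must satisfy l ∣ x_i for all i; consequently the only solution in Z_l is the trivial one. -/

import Mathlib

open PadicInt in
lemma aux_toZMod_zero_iff {l : ℕ} [Fact l.Prime] (z : ℤ_[l]) :
    PadicInt.toZMod z = 0 ↔ (l : ℤ_[l]) ∣ z := by
  rw [← RingHom.mem_ker, PadicInt.ker_toZMod, PadicInt.maximalIdeal_eq_span_p,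
    Ideal.mem_span_singleton]

/-- Every solution has all coordinates divisible by `l`. -/
lemma aux_step (p l : ℕ) [hp : Fact p.Prime] [hl : Fact l.Prime]
    (α : ℤ) (hα : ¬ ∃ b : ZMod l, b ^ p = (α : ZMod l))
    (x : Fin (p + 1) → ℤ_[l])
    (hx : ∑ i : Fin p, (l : ℤ_[l]) ^ (i : ℕ) * x i.succ ^ p = (α : ℤ_[l]) * x 0 ^ p) :
    ∀ i, (l : ℤ_[l]) ∣ x i := by
  have hlprime : Prime ((l : ℤ_[l])) := PadicInt.prime_p
  have hppos : 0 < p := hp.out.pos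
  -- reduce the equation mod l
  have hmod : (PadicInt.toZMod (x ⟨1, by omega⟩)) ^ p
      = (α : ZMod l) * (PadicInt.toZMod (x 0)) ^ p := by
    have := congrArg (PadicInt.toZMod (p := l)) hx
    simp only [map_sum, map_mul, map_pow, map_natCast, map_intCast] at this
    rw [Finset.sum_eq_single (⟨0, hppos⟩ : Fin p)] at this
    · simpa [ZMod.natCast_self, Fin.succ] using this
    · intro i _ hi
      have : (i : ℕ) ≠ 0 := fun h => hi (Fin.ext h)
      simp [ZMod.natCast_self, zero_pow this]
    · simp
  -- l ∣ x 0
  have h0 : (l : ℤ_[l]) ∣ x 0 := by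
    by_contra h0
    have hz : PadicInt.toZMod (x 0) ≠ 0 := fun h => h0 ((aux_toZMod_zero_iff _).mp h)
    refine hα ⟨PadicInt.toZMod (x ⟨1, by omega⟩) * (PadicInt.toZMod (x 0))⁻¹, ?_⟩
    rw [mul_pow, hmod, inv_pow, mul_assoc, mul_inv_cancel₀ (pow_ne_zero _ hz), mul_one]
  -- strong induction on the index
  have key : ∀ k : ℕ, ∀ hk : k < p + 1, (l : ℤ_[l]) ∣ x ⟨k, hk⟩ := by
    intro k
    induction k using Nat.strong_induction_on with
    | _ k ih =>
      intro hk
      match k with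
      | 0 => exact h0
      | Nat.succ k =>
        have hkp : k + 1 ≤ p := by omega
        -- l^(k+1) divides l^k * x (k+1) ^ p
        have hterm : (l : ℤ_[l]) ^ k * x ⟨k + 1, hk⟩ ^ p
            = (α : ℤ_[l]) * x 0 ^ p
              - ∑ i ∈ Finset.univ.erase (⟨k, by omega⟩ : Fin p),
                  (l : ℤ_[l]) ^ (i : ℕ) * x i.succ ^ p := by
          rw [← hx, ← Finset.add_sum_erase _ _ (Finset.mem_univ (⟨k, by omega⟩ : Fin p))]
          simp [Fin.succ]
        have hdvd2 : (l : ℤ_[l]) ^ (k + 1) ∣ (l : ℤ_[l]) ^ k * x ⟨k + 1, hk⟩ ^ p := by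
          rw [hterm]
          apply dvd_sub
          · -- α * x0^p : divisible by l^p, p ≥ k+1
            have : (l : ℤ_[l]) ^ p ∣ x 0 ^ p := pow_dvd_pow_of_dvd h0 p
            exact Dvd.dvd.mul_left (dvd_trans (pow_dvd_pow _ hkp) this) _
          · apply Finset.dvd_sum
            intro i hi
            rcases lt_or_gt_of_ne (fun h : (i:ℕ) = k => (Finset.mem_erase.mp hi).1 (Fin.ext h))
              with hlt | hgt
            · -- i < k : l ∣ x i.succ, so l^p divides, p ≥ k+1
              have hdl : (l : ℤ_[l]) ∣ x i.succ := ih (i + 1) (by omega) (by omega)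
              have : (l : ℤ_[l]) ^ p ∣ x i.succ ^ p := pow_dvd_pow_of_dvd hdl p
              exact Dvd.dvd.mul_left (dvd_trans (pow_dvd_pow _ hkp) this) _
            · -- i > k : l^(k+1) ∣ l^i
              exact Dvd.dvd.mul_right (pow_dvd_pow _ hgt) _
        have hcancel : (l : ℤ_[l]) ∣ x ⟨k + 1, hk⟩ ^ p := by
          rw [pow_succ] at hdvd2
          exact (mul_dvd_mul_iff_left (pow_ne_zero k hlprime.ne_zero)).mp hdvd2
        exact hlprime.dvd_of_dvd_pow hcancel
  intro i
  exact key i i.isLt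

set_option maxHeartbeats 800000 in
lemma aux_descent (p l : ℕ) [hp : Fact p.Prime] [hl : Fact l.Prime]
    (α : ℤ) (hα : ¬ ∃ b : ZMod l, b ^ p = (α : ZMod l)) :
    ∀ n : ℕ, ∀ x : Fin (p + 1) → ℤ_[l],
      (∑ i : Fin p, (l : ℤ_[l]) ^ (i : ℕ) * x i.succ ^ p = (α : ℤ_[l]) * x 0 ^ p) →
      ∀ i, (l : ℤ_[l]) ^ n ∣ x i := by
  intro n
  induction n with
  | zero => intro x _ i; simp
  | succ n ih =>
    intro x hx i
    have hstep := aux_step p l α hα x hx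
    choose y hy using hstep
    have hlne : (l : ℤ_[l]) ≠ 0 := (PadicInt.prime_p).ne_zero
    have hy' : ∑ i : Fin p, (l : ℤ_[l]) ^ (i : ℕ) * y i.succ ^ p
        = (α : ℤ_[l]) * y 0 ^ p := by
      apply mul_left_cancel₀ (pow_ne_zero p hlne)
      rw [Finset.mul_sum]
      calc ∑ i : Fin p, (l:ℤ_[l])^p * ((l : ℤ_[l]) ^ (i : ℕ) * y i.succ ^ p)
          = ∑ i : Fin p, (l : ℤ_[l]) ^ (i : ℕ) * x i.succ ^ p := by
            apply Finset.sum_congr rfl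
            intro i _
            rw [hy i.succ]
            ring
        _ = (α : ℤ_[l]) * x 0 ^ p := hx
        _ = (l:ℤ_[l])^p * ((α : ℤ_[l]) * y 0 ^ p) := by rw [hy 0]; ring
    rw [hy i, pow_succ']
    exact mul_dvd_mul_left _ (ih y hy' i)

/-- Let `p, l` be primes with `p ∣ l - 1`, and `α ∈ ℤ` with `α mod l` not a
`p`-th power in `F_l`. Then any solution `(x 0, …, x p)` in `ℤ_[l]` of
`x 1 ^ p + l * x 2 ^ p + ⋯ + l ^ (p-1) * x p ^ p = α * x 0 ^ p` satisfies `l ∣ x i` for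
all `i`; consequently the only solution in `ℤ_[l]` is the trivial one. -/
theorem stmt_4 (p l : ℕ) [Fact p.Prime] [Fact l.Prime] (hdvd : p ∣ l - 1)
    (α : ℤ) (hα : ¬ ∃ b : ZMod l, b ^ p = (α : ZMod l))
    (x : Fin (p + 1) → ℤ_[l])
    (hx : ∑ i : Fin p, (l : ℤ_[l]) ^ (i : ℕ) * x i.succ ^ p = (α : ℤ_[l]) * x 0 ^ p) :
    (∀ i, (l : ℤ_[l]) ∣ x i) ∧ x = 0 := by
  refine ⟨aux_step p l α hα x hx, ?_⟩
  funext i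
  have hall : ∀ n : ℕ, (l : ℤ_[l]) ^ n ∣ x i := fun n => aux_descent p l α hα n x hx i
  by_contra hne
  have hne : x i ≠ 0 := hne
  have hval : ∀ n : ℕ, (n : ℤ) ≤ (x i).valuation := by
    intro n
    rw [Nat.cast_le, ← PadicInt.mem_span_pow_iff_le_valuation _ hne, Ideal.mem_span_singleton]
    exact hall n
  have := hval ((x i).valuation + 1)
  omega
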